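/- Let r₁, …, r_m ∈ ℝⁿ be linearly independent vectors and let E₁, …, E_m be finite subsets of ℝⁿ such that rᵢ lies in the linear span of Eᵢ for each i = 1, …, m. Then there exist linearly independent vectors e₁, …, e_m ∈ ℝⁿ such that eᵢ ∈ Eᵢ for every i = 1, …, m. -/

import Mathlib

/-- Let `r₁, …, r_m ∈ ℝⁿ` be linearly independent vectors and let
`E₁, …, E_m` be finite subsets of `ℝⁿ` such that `rᵢ` lies in the linear span of `Eᵢ` for
each `i`. Then there exist linearly independent vectors `e₁, …, e_m ∈ ℝⁿ` such that
`eᵢ ∈ Eᵢ` for every `i` (a linearly independent transversal, via Rado's theorem). -/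
theorem exists_linearIndependent_transversal
    (m n : ℕ) (r : Fin m → (Fin n → ℝ)) (hr : LinearIndependent ℝ r)
    (E : Fin m → Finset (Fin n → ℝ))
    (hrE : ∀ i, r i ∈ Submodule.span ℝ (E i : Set (Fin n → ℝ))) :
    ∃ e : Fin m → (Fin n → ℝ), LinearIndependent ℝ e ∧ ∀ i, e i ∈ E i := by
  classical
  -- Build a linear map φ : ℝⁿ → ℝᵐ with φ (r i) = Pi.single i 1.
  obtain ⟨q, hq⟩ := (Submodule.span ℝ (Set.range r)).exists_isCompl
  let π := Submodule.linearProjOfIsCompl _ _ hq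
  let φ : (Fin n → ℝ) →ₗ[ℝ] (Fin m → ℝ) :=
    (Finsupp.linearEquivFunOnFinite ℝ ℝ (Fin m)).toLinearMap ∘ₗ (hr.repr : _ →ₗ[ℝ] _) ∘ₗ π
  have hφr : ∀ i, φ (r i) = Pi.single i 1 := by
    intro i
    have h1 : π (r i) = ⟨r i, Submodule.subset_span (Set.mem_range_self i)⟩ :=
      Submodule.linearProjOfIsCompl_apply_left hq ⟨r i, Submodule.subset_span (Set.mem_range_self i)⟩
    have h2 : hr.repr ⟨r i, Submodule.subset_span (Set.mem_range_self i)⟩ = Finsupp.single i 1 :=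
      hr.repr_eq_single i _ rfl
    simp only [φ, LinearMap.coe_comp, Function.comp_apply, h1, h2]
    ext j
    simp [Finsupp.linearEquivFunOnFinite, Finsupp.single_apply, Pi.single_apply, eq_comm]
    exact Finsupp.single_apply.symm
  -- coefficients
  have hc : ∀ i, ∃ c : (Fin n → ℝ) → ℝ, ∑ v ∈ E i, c v • v = r i := by
    intro i
    exact (Submodule.mem_span_finset.mp (hrE i)).imp fun _ h => h.2
  choose c hcspec using hc
  -- determinant as a multilinear map in the rows
  let f : MultilinearMap ℝ (fun _ : Fin m => (Fin m → ℝ)) ℝ :=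
    (Matrix.detRowAlternating : AlternatingMap ℝ (Fin m → ℝ) ℝ (Fin m)).toMultilinearMap
  have key : f (fun i => φ (r i)) =
      ∑ e ∈ Fintype.piFinset E, (∏ i, c i (e i)) * f (fun i => φ (e i)) := by
    have h1 : (fun i => φ (r i)) = fun i => ∑ v ∈ E i, c i v • φ v := by
      funext i
      rw [← hcspec i]
      simp [map_sum, map_smul]
    rw [h1, f.map_sum_finset (fun i v => c i v • φ v) E]
    refine Finset.sum_congr rfl fun e _ => ?_
    rw [f.map_smul_univ, smul_eq_mul]
  have hdet1 : f (fun i => φ (r i)) = 1 := by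
    have : (Matrix.of fun i => φ (r i)) = (1 : Matrix (Fin m) (Fin m) ℝ) := by
      ext i j
      simp [hφr, Matrix.one_apply, Pi.single_apply, eq_comm]
    show Matrix.det (Matrix.of fun i => φ (r i)) = 1
    rw [this, Matrix.det_one]
  have : ∃ e ∈ Fintype.piFinset E, f (fun i => φ (e i)) ≠ 0 := by
    by_contra h
    push_neg at h
    rw [key, Finset.sum_eq_zero (fun e he => by rw [h e he, mul_zero])] at hdet1
    exact one_ne_zero hdet1.symm
  obtain ⟨e, he, hdet⟩ := this
  refine ⟨e, ?_, fun i => by simpa using (Fintype.mem_piFinset.mp he) i⟩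
  have hrows : LinearIndependent ℝ (fun i => (Matrix.of fun i => φ (e i)) i) :=
    Matrix.linearIndependent_rows_iff_isUnit.mpr
      ((Matrix.isUnit_iff_isUnit_det _).mpr (isUnit_iff_ne_zero.mpr hdet))
  have : LinearIndependent ℝ (φ ∘ e) := hrows
  exact LinearIndependent.of_comp φ this
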